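/- Let X be a finite ground set and f : Finset X → ℝ be monotone, submodular, and normalized, with curvature at most ν. Let R be a finite robot set and α a natural number. Suppose: (i) there is a set of bait robots D ⊆ R with |D| = min(α, |R|), a valid assignment B for D, and a valid assignment G for R \ D; (ii) for every bait action b ∈ B, assigned to robot r ∈ D, and every action x ∈ X_r ∪ ⋃_{i ∈ R \ D} X_i, one has f({b}) ≥ f({x}); and (iii) f(G) ≥ (1/2)·f(T) for every valid assignment T for R \ D. Let S = B ∪ G. Then for every attack A ⊆ S with |A| ≤ α and every valid assignment S' for R, there exists A' ⊆ S' with |A'| ≤ α such that f(S \ A) ≥ ((1 − ν)/2)·f(S' \ A'). -/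

import Mathlib

/-- `f` is monotone (non-decreasing). -/
def IsMonotoneFn {X : Type*} (f : Finset X → ℝ) : Prop :=
  ∀ ⦃A B : Finset X⦄, A ⊆ B → f A ≤ f B

/-- `f` is submodular. -/
def IsSubmodularFn {X : Type*} [DecidableEq X] (f : Finset X → ℝ) : Prop :=
  ∀ ⦃A B : Finset X⦄, A ⊆ B → ∀ x ∉ B, f (insert x A) - f A ≥ f (insert x B) - f B

/-- `f` is normalized. -/
def IsNormalizedFn {X : Type*} (f : Finset X → ℝ) : Prop := f ∅ = 0

/-- `f` has curvature at most `ν`. -/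
def CurvatureLE {X : Type*} [DecidableEq X] (f : Finset X → ℝ) (ν : ℝ) : Prop :=
  ∀ S : Finset X, ∀ x ∈ S, f S - f (S \ {x}) ≥ (1 - ν) * f {x}

/-- `S` is a valid assignment for the robots in `R'`. -/
def ValidAssign {X ι : Type*} [DecidableEq X] [DecidableEq ι]
    (Xact : ι → Finset X) (R' : Finset ι) (S : Finset X) : Prop :=
  S ⊆ R'.biUnion Xact ∧ ∀ i ∈ R', (S ∩ Xact i).card = 1

lemma my_subadd {X : Type*} [DecidableEq X] {f : Finset X → ℝ}
    (hmono : IsMonotoneFn f) (hsub : IsSubmodularFn f) (hnorm : IsNormalizedFn f)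
    (V W : Finset X) : f (W ∪ V) ≤ f W + ∑ x ∈ V, f {x} := by
  induction V using Finset.induction_on with
  | empty => simp
  | @insert x V hx ih =>
    rw [Finset.union_insert, Finset.sum_insert hx]
    have hx0 : 0 ≤ f {x} := by
      have := hmono (Finset.empty_subset {x}); rw [hnorm] at this; linarith
    by_cases hxW : x ∈ W ∪ V
    · rw [Finset.insert_eq_self.mpr hxW]; linarith
    · have h := hsub (Finset.empty_subset (W ∪ V)) x hxW
      have h2 : insert x (∅ : Finset X) = {x} := rfl
      rw [h2, hnorm] at h
      linarith

lemma my_curv_remove {X : Type*} [DecidableEq X] {f : Finset X → ℝ} {ν : ℝ}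
    (hcurv : CurvatureLE f ν) (M : Finset X) :
    ∀ W : Finset X, M ⊆ W → f (W \ M) + (1 - ν) * ∑ b ∈ M, f {b} ≤ f W := by
  induction M using Finset.induction_on with
  | empty => intro W _; simp
  | @insert b M hb ih =>
    intro W hMW
    have hbW : b ∈ W := hMW (Finset.mem_insert_self b M)
    have h1 := hcurv W b hbW
    have hMW' : M ⊆ W \ {b} := by
      intro x hx
      rw [Finset.mem_sdiff, Finset.mem_singleton]
      exact ⟨hMW (Finset.mem_insert_of_mem hx), fun h => hb (h ▸ hx)⟩
    have h2 := ih (W \ {b}) hMW'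
    have heq : (W \ {b}) \ M = W \ insert b M := by
      ext x; simp only [Finset.mem_sdiff, Finset.mem_singleton, Finset.mem_insert]; tauto
    rw [heq] at h2
    rw [Finset.sum_insert hb]
    nlinarith [h1, h2]

lemma assign_card {X ι : Type*} [DecidableEq X] [DecidableEq ι]
    (Xact : ι → Finset X) (hXdisj : ∀ i j : ι, i ≠ j → Disjoint (Xact i) (Xact j))
    (R' : Finset ι) (S : Finset X) (h : ValidAssign Xact R' S) : S.card = R'.card := by
  have hSeq : S = R'.biUnion (fun i => S ∩ Xact i) := by
    ext x
    simp only [Finset.mem_biUnion, Finset.mem_inter]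
    constructor
    · intro hx
      obtain ⟨i, hi, hxi⟩ := Finset.mem_biUnion.mp (h.1 hx)
      exact ⟨i, hi, hx, hxi⟩
    · rintro ⟨i, _, hx, _⟩; exact hx
  rw [hSeq, Finset.card_biUnion, Finset.sum_congr rfl (fun i hi => h.2 i hi)]
  · simp
  · intro i hi j hj hij
    exact Finset.disjoint_of_subset_left Finset.inter_subset_right
      (Finset.disjoint_of_subset_right Finset.inter_subset_right (hXdisj i j hij))

/-- Single-clique case (K = 1) of Theorem 2: guarantee of the centralized
bait-plus-greedy algorithm `central-robust` against `α` worst-case attacks. -/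
theorem central_robust_approximation_guarantee
    {X ι : Type*} [Fintype X] [DecidableEq X] [Fintype ι] [DecidableEq ι]
    (f : Finset X → ℝ) (ν : ℝ)
    (hmono : IsMonotoneFn f) (hsub : IsSubmodularFn f) (hnorm : IsNormalizedFn f)
    (hcurv : CurvatureLE f ν)
    (Xact : ι → Finset X)
    (hXne : ∀ i : ι, (Xact i).Nonempty)
    (hXdisj : ∀ i j : ι, i ≠ j → Disjoint (Xact i) (Xact j))
    (R : Finset ι) (α : ℕ)
    (D : Finset ι) (B G : Finset X)
    (hD : D ⊆ R)
    (hDcard : D.card = min α R.card)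
    (hB : ValidAssign Xact D B)
    (hG : ValidAssign Xact (R \ D) G)
    (hbait : ∀ r ∈ D, ∀ b ∈ B ∩ Xact r,
      ∀ x ∈ Xact r ∪ (R \ D).biUnion Xact, f {b} ≥ f {x})
    (hgreedy : ∀ T : Finset X, ValidAssign Xact (R \ D) T → f G ≥ (1 / 2) * f T)
    (S : Finset X) (hS : S = B ∪ G) :
    ∀ A ⊆ S, A.card ≤ α → ∀ S' : Finset X, ValidAssign Xact R S' →
      ∃ A' ⊆ S', A'.card ≤ α ∧ f (S \ A) ≥ ((1 - ν) / 2) * f (S' \ A') := by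
  subst hS
  intro A hAS hAcard S' hS'
  have hf0 : ∀ T : Finset X, 0 ≤ f T := by
    intro T
    have := hmono (Finset.empty_subset T)
    rw [hnorm] at this; exact this
  -- the counter-attack
  set A' : Finset X := S' ∩ D.biUnion Xact with hA'def
  have hA'sub : A' ⊆ S' := Finset.inter_subset_left
  have hA'card : A'.card ≤ α := by
    have h1 : A' ⊆ D.biUnion (fun i => S' ∩ Xact i) := by
      intro x hx
      obtain ⟨hxS', hxb⟩ := Finset.mem_inter.mp hx
      obtain ⟨i, hiD, hxi⟩ := Finset.mem_biUnion.mp hxb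
      exact Finset.mem_biUnion.mpr ⟨i, hiD, Finset.mem_inter.mpr ⟨hxS', hxi⟩⟩
    calc A'.card ≤ (D.biUnion (fun i => S' ∩ Xact i)).card := Finset.card_le_card h1
      _ ≤ ∑ i ∈ D, (S' ∩ Xact i).card := Finset.card_biUnion_le
      _ = ∑ i ∈ D, 1 := Finset.sum_congr rfl (fun i hi => hS'.2 i (hD hi))
      _ = D.card := by simp
      _ ≤ α := by rw [hDcard]; exact min_le_left α R.card
  have hTvalid : ValidAssign Xact (R \ D) (S' \ A') := by
    constructor
    · intro x hx
      rw [Finset.mem_sdiff] at hx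
      obtain ⟨hxS', hxA'⟩ := hx
      obtain ⟨i, hiR, hxi⟩ := Finset.mem_biUnion.mp (hS'.1 hxS')
      have hiD : i ∉ D := fun hiD =>
        hxA' (Finset.mem_inter.mpr ⟨hxS', Finset.mem_biUnion.mpr ⟨i, hiD, hxi⟩⟩)
      exact Finset.mem_biUnion.mpr ⟨i, Finset.mem_sdiff.mpr ⟨hiR, hiD⟩, hxi⟩
    · intro i hi
      rw [Finset.mem_sdiff] at hi
      have heq : (S' \ A') ∩ Xact i = S' ∩ Xact i := by
        ext x
        simp only [Finset.mem_inter, Finset.mem_sdiff]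
        constructor
        · tauto
        · rintro ⟨hxS', hxi⟩
          refine ⟨⟨hxS', ?_⟩, hxi⟩
          intro hxA'
          obtain ⟨_, hxbU⟩ := Finset.mem_inter.mp hxA'
          obtain ⟨j, hjD, hxj⟩ := Finset.mem_biUnion.mp hxbU
          have hij : i ≠ j := fun h => hi.2 (h ▸ hjD)
          exact Finset.disjoint_left.mp (hXdisj i j hij) hxi hxj
      rw [heq]
      exact hS'.2 i hi.1
  refine ⟨A', hA'sub, hA'card, ?_⟩
  have hgr : f G ≥ (1 / 2) * f (S' \ A') := hgreedy _ hTvalid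
  have hT0 : 0 ≤ f (S' \ A') := hf0 _
  have hSA0 : 0 ≤ f ((B ∪ G) \ A) := hf0 _
  by_cases hν1 : 1 ≤ ν
  · have : ((1 - ν) / 2) * f (S' \ A') ≤ 0 :=
      mul_nonpos_iff.mpr (Or.inr ⟨by linarith, hT0⟩)
    linarith
  by_cases hν0 : ν < 0
  · -- f is identically zero
    have hsing : ∀ x : X, f {x} = 0 := by
      intro x
      have h1 := hcurv {x} x (Finset.mem_singleton_self x)
      rw [Finset.sdiff_self, hnorm] at h1
      have h3 : 0 ≤ f {x} := hf0 _
      nlinarith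
    have hTz : f (S' \ A') ≤ 0 := by
      have h := my_subadd hmono hsub hnorm (S' \ A') ∅
      rw [Finset.empty_union, hnorm, Finset.sum_eq_zero (fun x _ => hsing x)] at h
      linarith
    have : f (S' \ A') = 0 := le_antisymm hTz hT0
    rw [this, mul_zero]
    exact hSA0
  push_neg at hν0 hν1
  -- main case : 0 ≤ ν < 1
  have hdisjBG : Disjoint B G := by
    rw [Finset.disjoint_left]
    intro x hxB hxG
    obtain ⟨i, hiD, hxi⟩ := Finset.mem_biUnion.mp (hB.1 hxB)
    obtain ⟨j, hjRD, hxj⟩ := Finset.mem_biUnion.mp (hG.1 hxG)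
    have hij : i ≠ j := by
      intro h
      exact (Finset.mem_sdiff.mp hjRD).2 (h ▸ hiD)
    exact Finset.disjoint_left.mp (hXdisj i j hij) hxi hxj
  have hAeq : A = (A ∩ B) ∪ (A ∩ G) := by
    have h : A ∩ (B ∪ G) = A := Finset.inter_eq_left.mpr hAS
    rw [Finset.inter_union_distrib_left] at h
    exact h.symm
  have hABG : A.card = (A ∩ B).card + (A ∩ G).card := by
    conv_lhs => rw [hAeq]
    exact Finset.card_union_of_disjoint
      (hdisjBG.mono Finset.inter_subset_right Finset.inter_subset_right)
  have hcardMG : (A ∩ G).card ≤ (B \ A).card := by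
    rcases le_or_gt α R.card with hle | hlt
    · have hBA : B \ A = B \ (A ∩ B) := by
        ext x; simp only [Finset.mem_sdiff, Finset.mem_inter]; tauto
      have h1 : (B \ A).card = B.card - (A ∩ B).card := by
        rw [hBA]; exact Finset.card_sdiff_of_subset Finset.inter_subset_right
      have h2 : (A ∩ B).card ≤ B.card := Finset.card_le_card Finset.inter_subset_right
      have hBc : B.card = α := by
        rw [assign_card Xact hXdisj D B hB, hDcard, min_eq_left hle]
      omega
    · have hDR : D = R := by
        have h : D.card = R.card := by rw [hDcard, min_eq_right hlt.le]
        exact Finset.eq_of_subset_of_card_le hD h.ge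
      have hGempty : G = ∅ := by
        have h := hG.1
        rw [hDR, Finset.sdiff_self] at h
        simpa using Finset.subset_empty.mp (by simpa using h)
      simp [hGempty]
  obtain ⟨M, hMsub, hMcard⟩ := Finset.exists_subset_card_eq hcardMG
  -- every bait dominates every greedy action
  have hdom : ∀ g ∈ A ∩ G, ∀ b ∈ M, f {g} ≤ f {b} := by
    intro g hg b hb
    have hbB : b ∈ B := (Finset.mem_sdiff.mp (hMsub hb)).1
    obtain ⟨r, hrD, hbr⟩ := Finset.mem_biUnion.mp (hB.1 hbB)
    have hgG : g ∈ G := (Finset.mem_inter.mp hg).2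
    exact hbait r hrD b (Finset.mem_inter.mpr ⟨hbB, hbr⟩) g
      (Finset.mem_union_right _ (hG.1 hgG))
  have hsumMG : ∑ g ∈ A ∩ G, f {g} ≤ ∑ b ∈ M, f {b} := by
    rcases M.eq_empty_or_nonempty with hMe | hMne
    · have : A ∩ G = ∅ := Finset.card_eq_zero.mp (by rw [← hMcard, hMe]; simp)
      rw [this, hMe]
    · set c : ℝ := M.inf' hMne (fun b => f {b}) with hc
      have h1 : ∑ g ∈ A ∩ G, f {g} ≤ (A ∩ G).card • c :=
        Finset.sum_le_card_nsmul _ _ _ (fun g hg =>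
          Finset.le_inf' hMne _ (fun b hb => hdom g hg b hb))
      have h2 : M.card • c ≤ ∑ b ∈ M, f {b} :=
        Finset.card_nsmul_le_sum _ _ _ (fun b hb => Finset.inf'_le _ hb)
      rw [hMcard] at h2
      linarith
  have hMSA : M ⊆ (B ∪ G) \ A :=
    hMsub.trans (Finset.sdiff_subset_sdiff Finset.subset_union_left Finset.Subset.rfl)
  have hcurvstep := my_curv_remove hcurv M ((B ∪ G) \ A) hMSA
  have hGsub : G \ A ⊆ ((B ∪ G) \ A) \ M := by
    intro x hx
    obtain ⟨hxG, hxA⟩ := Finset.mem_sdiff.mp hx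
    refine Finset.mem_sdiff.mpr ⟨Finset.mem_sdiff.mpr ⟨Finset.mem_union_right _ hxG, hxA⟩, ?_⟩
    intro hxM
    exact Finset.disjoint_left.mp hdisjBG (Finset.mem_sdiff.mp (hMsub hxM)).1 hxG
  have hmonoG : f (G \ A) ≤ f (((B ∪ G) \ A) \ M) := hmono hGsub
  have hsubaddG : f G ≤ f (G \ A) + ∑ x ∈ A ∩ G, f {x} := by
    have h := my_subadd hmono hsub hnorm (A ∩ G) (G \ A)
    have hun : (G \ A) ∪ (A ∩ G) = G := by
      ext x
      simp only [Finset.mem_union, Finset.mem_sdiff, Finset.mem_inter]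
      tauto
    rwa [hun] at h
  have hmul1 : (1 - ν) * ∑ g ∈ A ∩ G, f {g} ≤ (1 - ν) * ∑ b ∈ M, f {b} :=
    mul_le_mul_of_nonneg_left hsumMG (by linarith)
  have hmul2 : (1 - ν) * f G ≤ (1 - ν) * (f (G \ A) + ∑ x ∈ A ∩ G, f {x}) :=
    mul_le_mul_of_nonneg_left hsubaddG (by linarith)
  have hmul3 : (1 - ν) * ((1 / 2) * f (S' \ A')) ≤ (1 - ν) * f G :=
    mul_le_mul_of_nonneg_left hgr (by linarith)
  have hνfGA : 0 ≤ ν * f (G \ A) := mul_nonneg hν0 (hf0 _)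
  nlinarith [hcurvstep, hmonoG, hmul1, hmul2, hmul3, hνfGA]
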